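/- For a set P of primes not dividing a fixed positive integer p, the density (within integers coprime to p) of integers all of whose P-prime factors occur to even powers equals the infinite product ∏_{s∈P} s/(s+1) (interpreted as the limit of partial products), and if ∑_{s∈P} 1/s = ∞ then ∏_{s∈P} s/(s+1) = 0. In particular, prove: for every prime s ≥ 2, log(s+1) - log(s) ≥ 1/(s+1), and hence ∑_{s∈P} 1/s = ∞ implies ∑_{s∈P}(log(s+1) - log(s)) = ∞, so ∏_{s∈P} s/(s+1) = 0. -/

import Mathlib

open scoped Classical

lemma key_log (x : ℝ) (hx : 0 < x) :
    Real.log (x + 1) - Real.log x ≥ 1 / (x + 1) := by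
  have hx1 : 0 < x + 1 := by linarith
  have h := Real.log_le_sub_one_of_pos (show 0 < x / (x + 1) by positivity)
  rw [Real.log_div hx.ne' hx1.ne'] at h
  have : x / (x + 1) - 1 = -(1 / (x + 1)) := by field_simp; ring
  rw [this] at h
  linarith

open scoped Classical in
/-- For a set `P` of primes not dividing a fixed positive integer
`p`: for every prime `s`, `log(s+1) - log(s) ≥ 1/(s+1)`; and if `∑_{s∈P} 1/s`
diverges then the infinite product `∏_{s∈P} s/(s+1)` equals `0` (as the limit of
partial products). -/
theorem stmt17 (p : ℕ) (hp : 0 < p) (P : Set ℕ)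
    (hP : ∀ s ∈ P, Nat.Prime s ∧ ¬ s ∣ p) :
    (∀ s : ℕ, s.Prime → Real.log ((s : ℝ) + 1) - Real.log (s : ℝ) ≥ 1 / ((s : ℝ) + 1)) ∧
    ((¬ Summable (fun s : P => (1 : ℝ) / ((s : ℕ) : ℝ))) →
      Filter.Tendsto
        (fun N : ℕ => ∏ s ∈ (Finset.range N).filter (· ∈ P), (s : ℝ) / ((s : ℝ) + 1))
        Filter.atTop (nhds 0)) := by
  constructor
  · intro s hs
    exact key_log s (by exact_mod_cast hs.pos)
  · intro hsum
    -- the shifted sum over P also diverges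
    have hsum' : ¬ Summable (fun s : P => (1 : ℝ) / (((s : ℕ) : ℝ) + 1)) := by
      intro h
      apply hsum
      refine Summable.of_nonneg_of_le (fun s => by positivity) ?_ (h.mul_left 2)
      intro s
      have hs2 : (2 : ℝ) ≤ ((s : ℕ) : ℝ) := by exact_mod_cast (hP s s.2).1.two_le
      rw [show (2:ℝ)*(1/(((s:ℕ):ℝ)+1)) = 2/(((s:ℕ):ℝ)+1) by ring,
        div_le_div_iff₀ (by linarith) (by linarith)]
      linarith
    -- indicator function
    set g : ℕ → ℝ := P.indicator (fun s => 1 / ((s : ℝ) + 1)) with hg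
    have hgnn : ∀ n, 0 ≤ g n := fun n => Set.indicator_nonneg (fun s _ => by positivity) n
    have hgns : ¬ Summable g := fun h => hsum' ((summable_subtype_iff_indicator).2 h)
    have hS : Filter.Tendsto (fun N : ℕ => ∑ s ∈ Finset.range N, g s)
        Filter.atTop Filter.atTop :=
      (not_summable_iff_tendsto_nat_atTop_of_nonneg hgnn).1 hgns
    have hSeq : ∀ N : ℕ, ∑ s ∈ Finset.range N, g s
        = ∑ s ∈ (Finset.range N).filter (· ∈ P), 1 / ((s : ℝ) + 1) := by
      intro N
      rw [Finset.sum_filter]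
      exact Finset.sum_congr rfl (fun s _ => by
        by_cases h : s ∈ P <;> simp [hg, Set.indicator, h])
    -- bound the product
    have hub : ∀ N : ℕ, ∏ s ∈ (Finset.range N).filter (· ∈ P), (s : ℝ) / ((s : ℝ) + 1)
        ≤ Real.exp (-(∑ s ∈ Finset.range N, g s)) := by
      intro N
      rw [hSeq N, ← Finset.sum_neg_distrib, Real.exp_sum]
      apply Finset.prod_le_prod
      · intro s _; positivity
      · intro s hs
        have hsP : s ∈ P := (Finset.mem_filter.1 hs).2
        have hs0 : (0 : ℝ) < s := by exact_mod_cast (hP s hsP).1.pos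
        have hkey := key_log s hs0
        have : (s : ℝ) / ((s : ℝ) + 1) = Real.exp (Real.log s - Real.log ((s : ℝ) + 1)) := by
          rw [Real.exp_sub, Real.exp_log hs0, Real.exp_log (by linarith)]
        rw [this]
        exact Real.exp_le_exp.2 (by linarith)
    have hlb : ∀ N : ℕ, (0 : ℝ)
        ≤ ∏ s ∈ (Finset.range N).filter (· ∈ P), (s : ℝ) / ((s : ℝ) + 1) := by
      intro N
      apply Finset.prod_nonneg
      intro s _; positivity
    have hexp : Filter.Tendsto (fun N : ℕ => Real.exp (-(∑ s ∈ Finset.range N, g s)))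
        Filter.atTop (nhds 0) :=
      Real.tendsto_exp_atBot.comp (Filter.tendsto_neg_atBot_iff.2 hS)
    exact tendsto_of_tendsto_of_tendsto_of_le_of_le tendsto_const_nhds hexp hlb hub
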